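/- If λ is a singular cardinal that is the supremum of an increasing ω-sequence of supercompact cardinals ⟨κ_n : n < ω⟩, then Δ_{λ,λ⁺} holds: for every ν < λ, every stationary S ⊆ E^{λ⁺}_{<λ}, and every algebra A on λ⁺ with ν many operations, there is a subalgebra A' of A whose order type is a regular cardinal below λ such that S ∩ A' is stationary in sup(A'). -/

import Mathlib

/-- `β` is an accumulation point of `C`. -/
def accPts (C : Set Ordinal) : Set Ordinal :=
  {β | 0 < β ∧ ∀ x < β, ∃ y ∈ C, x < y ∧ y < β}

/-- `C` is a closed unbounded subset of the ordinal `σ`. -/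
def IsClubIn (C : Set Ordinal) (σ : Ordinal) : Prop :=
  C ⊆ Set.Iio σ ∧ (∀ α < σ, ∃ β ∈ C, α ≤ β) ∧ ∀ α < σ, α ∈ accPts C → α ∈ C

/-- `S` is stationary in the ordinal `σ`. -/
def IsStatIn (S : Set Ordinal) (σ : Ordinal) : Prop :=
  ∀ C, IsClubIn C σ → (S ∩ C).Nonempty

/-- `P_κ(μ)`: subsets of `μ` of size `< κ`. -/
def Pk (κ μ : Cardinal.{0}) :=
  {x : Set Ordinal // x ⊆ Set.Iio μ.ord ∧ Cardinal.mk ↥x < Cardinal.lift.{1} κ}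

/-- `U` is a normal, fine, `κ`-complete ultrafilter on `P_κ(μ)`. -/
def IsNormalFineUF (κ μ : Cardinal) (U : Set (Set (Pk κ μ))) : Prop :=
  Set.univ ∈ U ∧ ∅ ∉ U ∧
  (∀ A B : Set (Pk κ μ), A ∈ U → A ⊆ B → B ∈ U) ∧
  (∀ A B : Set (Pk κ μ), A ∈ U → B ∈ U → A ∩ B ∈ U) ∧
  (∀ A : Set (Pk κ μ), A ∈ U ∨ (Set.univ \ A) ∈ U) ∧
  (∀ o : Ordinal, o < κ.ord → ∀ f : Ordinal → Set (Pk κ μ),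
    (∀ i, i < o → f i ∈ U) → {x | ∀ i, i < o → x ∈ f i} ∈ U) ∧
  (∀ α, α < μ.ord → {x : Pk κ μ | α ∈ x.val} ∈ U) ∧
  (∀ F : Pk κ μ → Ordinal, {x | F x ∈ x.val} ∈ U → ∃ α, {x | F x = α} ∈ U)

/-- `κ` is supercompact: it is `μ`-supercompact for every `μ ≥ κ`. -/
def IsSupercompact (κ : Cardinal) : Prop :=
  ∀ μ : Cardinal, κ ≤ μ → ∃ U : Set (Set (Pk κ μ)), IsNormalFineUF κ μ U

/-- `B` is closed under all the operations of the algebra. -/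
def ClosedUnderOps {ι : Type} (n : ι → ℕ) (f : ∀ i, (Fin (n i) → Ordinal) → Ordinal)
    (B : Set Ordinal) : Prop :=
  ∀ i (v : Fin (n i) → Ordinal), (∀ j, v j ∈ B) → f i v ∈ B

/-- The order type of a set of ordinals. -/
noncomputable def SetOType (s : Set Ordinal) : Ordinal.{1} :=
  @Ordinal.type _ (Subrel ((· < ·) : Ordinal → Ordinal → Prop) s)
    (inferInstanceAs (IsWellOrder _ (Subrel (· < ·) (· ∈ s))))

instance instIsWellOrderSubrelSetOrd (s : Set Ordinal) :
    IsWellOrder _ (Subrel ((· < ·) : Ordinal → Ordinal → Prop) s) :=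
  inferInstanceAs (IsWellOrder _ (Subrel (· < ·) (· ∈ s)))

/-! ### Order types of sets of ordinals -/

open Ordinal Set Cardinal

theorem setOType_Iio (b : Ordinal) : SetOType (Set.Iio b) = Ordinal.lift.{1} b :=
  type_lt_Iio b

theorem setOType_mono {s t : Set Ordinal} (h : s ⊆ t) : SetOType s ≤ SetOType t := by
  have e : Subrel ((· < ·) : Ordinal → Ordinal → Prop) s ↪r
      Subrel ((· < ·) : Ordinal → Ordinal → Prop) t :=
    RelEmbedding.ofMonotone (fun a => (⟨a.1, h a.2⟩ : t)) (fun a b hab => hab)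
  exact e.ordinal_type_le

theorem setOType_inter_Iio {s : Set Ordinal} {ξ : Ordinal} (hξ : ξ ∈ s) :
    SetOType (s ∩ Set.Iio ξ) =
      Ordinal.typein (Subrel ((· < ·) : Ordinal → Ordinal → Prop) s) ⟨ξ, hξ⟩ := by
  rw [← Ordinal.type_subrel]
  apply Ordinal.type_eq.2
  constructor
  exact RelIso.mk
    ⟨fun a => ⟨⟨a.1, a.2.1⟩, a.2.2⟩, fun b => ⟨b.1.1, b.1.2, b.2⟩, fun a => rfl, fun b => rfl⟩
    (Iff.rfl)

theorem setOType_lt {s : Set Ordinal} {ξ : Ordinal} (hξ : ξ ∈ s) :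
    SetOType (s ∩ Set.Iio ξ) < SetOType s := by
  rw [setOType_inter_Iio hξ]; exact Ordinal.typein_lt_type _ _

theorem setOType_surj {s : Set Ordinal} {i : Ordinal.{1}} (hi : i < SetOType s) :
    ∃ ξ ∈ s, SetOType (s ∩ Set.Iio ξ) = i := by
  obtain ⟨a, ha⟩ := Ordinal.typein_surj _ hi
  exact ⟨a.1, a.2, by rw [setOType_inter_Iio a.2]; exact ha⟩

open scoped Classical in
/-- the lowered (universe-0) order type of a set of ordinals -/
noncomputable def otp (s : Set Ordinal) : Ordinal :=
  if h : ∃ o : Ordinal.{0}, Ordinal.lift.{1} o = SetOType s then h.choose else 0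

theorem lift_otp {s : Set Ordinal} {b : Ordinal} (hs : s ⊆ Set.Iio b) :
    Ordinal.lift.{1} (otp s) = SetOType s := by
  have hle : SetOType s ≤ Ordinal.lift.{1} b := by
    rw [← setOType_Iio]; exact setOType_mono hs
  have h : ∃ o : Ordinal.{0}, Ordinal.lift.{1} o = SetOType s := by
    obtain ⟨o, ho⟩ := Ordinal.mem_range_lift_of_le hle
    exact ⟨o, ho⟩
  classical
  rw [otp]
  rw [dif_pos h]
  exact h.choose_spec

theorem otp_Iio (b : Ordinal) : otp (Set.Iio b) = b := by
  have := lift_otp (le_refl (Set.Iio b))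
  rw [setOType_Iio] at this
  exact Ordinal.lift_inj.1 this

theorem otp_mono {s t : Set Ordinal} {b : Ordinal} (ht : t ⊆ Set.Iio b) (h : s ⊆ t) :
    otp s ≤ otp t := by
  rw [← Ordinal.lift_le.{1}, lift_otp (h.trans ht), lift_otp ht]
  exact setOType_mono h

theorem otp_lt_of_mem {s : Set Ordinal} {b ξ : Ordinal} (hs : s ⊆ Set.Iio b) (hξ : ξ ∈ s) :
    otp (s ∩ Set.Iio ξ) < otp s := by
  rw [← Ordinal.lift_lt.{1}, lift_otp ((Set.inter_subset_left).trans hs), lift_otp hs]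
  exact setOType_lt hξ

theorem inter_Iio_inter_Iio {s : Set Ordinal} {ξ γ : Ordinal} (h : ξ ≤ γ) :
    (s ∩ Set.Iio γ) ∩ Set.Iio ξ = s ∩ Set.Iio ξ := by
  ext y; constructor
  · rintro ⟨⟨hy, _⟩, hy2⟩; exact ⟨hy, hy2⟩
  · rintro ⟨hy, hy2⟩; exact ⟨⟨hy, lt_of_lt_of_le hy2 h⟩, hy2⟩

theorem otp_inter_lt_inter {s : Set Ordinal} {b ξ γ : Ordinal} (hs : s ⊆ Set.Iio b)
    (hξ : ξ ∈ s) (hlt : ξ < γ) :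
    otp (s ∩ Set.Iio ξ) < otp (s ∩ Set.Iio γ) := by
  have h := otp_lt_of_mem (b := b) ((Set.inter_subset_left).trans hs)
    (show ξ ∈ s ∩ Set.Iio γ from ⟨hξ, hlt⟩)
  rwa [inter_Iio_inter_Iio hlt.le] at h

theorem otp_surj {s : Set Ordinal} {b : Ordinal} (hs : s ⊆ Set.Iio b) {i : Ordinal}
    (hi : i < otp s) : ∃ ξ ∈ s, otp (s ∩ Set.Iio ξ) = i := by
  have : Ordinal.lift.{1} i < SetOType s := by
    rw [← lift_otp hs]; exact Ordinal.lift_lt.2 hi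
  obtain ⟨ξ, hξs, hξ⟩ := setOType_surj this
  refine ⟨ξ, hξs, ?_⟩
  have := lift_otp ((Set.inter_subset_left).trans hs) (s := s ∩ Set.Iio ξ)
  rw [hξ] at this
  exact Ordinal.lift_inj.1 this

theorem otp_pos {s : Set Ordinal} {b ξ : Ordinal} (hs : s ⊆ Set.Iio b) (hξ : ξ ∈ s) :
    0 < otp s :=
  lt_of_le_of_lt (zero_le) (otp_lt_of_mem hs hξ)

theorem lift_card_otp {s : Set Ordinal} {b : Ordinal} (hs : s ⊆ Set.Iio b) :
    Cardinal.lift.{1} (otp s).card = Cardinal.mk s := by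
  have h1 := lift_otp hs
  have h2 : (Ordinal.lift.{1} (otp s)).card = (SetOType s).card := by rw [h1]
  rwa [← Ordinal.lift_card, SetOType, Ordinal.card_type] at h2

/-- An auxiliary "cofinal function" below an ordinal, indexed by ordinals below `o.cof.ord`. -/
theorem exists_cofinal_fun (o : Ordinal.{0}) (ho : 0 < o) :
    ∃ G : Ordinal → Ordinal, (∀ i, G i < o) ∧ ∀ t < o, ∃ i < o.cof.ord, t ≤ G i := by
  classical
  obtain ⟨ι, f, hlsub, hι⟩ := Ordinal.exists_lsub_cof o
  have hmk : Cardinal.mk (ULift.{1} ι) = Cardinal.mk (Set.Iio o.cof.ord) := by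
    rw [Cardinal.mk_uLift, Ordinal.mk_Iio_ordinal, Cardinal.card_ord, hι]
  obtain ⟨e⟩ := Cardinal.eq.1 hmk
  refine ⟨fun i => if h : i < o.cof.ord then f (e.symm ⟨i, h⟩).down else 0, fun i => ?_, ?_⟩
  · dsimp only
    by_cases h : i < o.cof.ord
    · rw [dif_pos h]
      exact lt_of_lt_of_le (Ordinal.lt_lsub f _) hlsub.le
    · rw [dif_neg h]; exact ho
  · intro t ht
    rw [← hlsub] at ht
    obtain ⟨i₀, hi₀⟩ := Ordinal.lt_lsub_iff.1 ht
    refine ⟨(e ⟨i₀⟩).1, (e ⟨i₀⟩).2, ?_⟩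
    dsimp only
    rw [dif_pos (show ((e ⟨i₀⟩ : Set.Iio o.cof.ord) : Ordinal) < o.cof.ord from (e ⟨i₀⟩).2)]
    have h3 : (⟨(e ⟨i₀⟩).1, (e ⟨i₀⟩).2⟩ : Set.Iio o.cof.ord) = e ⟨i₀⟩ := rfl
    rw [h3, e.symm_apply_apply]
    exact hi₀

/-! ### Club lemmas for the bespoke definitions -/

theorem bddAbove_of_subset_Iio {s : Set Ordinal} {b : Ordinal} (h : s ⊆ Set.Iio b) :
    BddAbove s := ⟨b, fun _ hy => (h hy).le⟩

theorem sSup_inter_Iio_le (s : Set Ordinal) (β : Ordinal) : sSup (s ∩ Set.Iio β) ≤ β :=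
  csSup_le' (fun _ hy => hy.2.le)

theorem accPts_isLimit {X : Set Ordinal} {α : Ordinal} (h : α ∈ accPts X) : Order.IsSuccLimit α := by
  refine Ordinal.isSuccLimit_iff.2 ⟨fun h0 => by simp [h0] at h; exact absurd h.1 (lt_irrefl 0),
    Order.isSuccPrelimit_of_succ_lt fun a ha => ?_⟩
  obtain ⟨y, _, hy1, hy2⟩ := h.2 a ha
  exact lt_of_le_of_lt (Order.succ_le_of_lt hy1) hy2

theorem accPts_mono {X Y : Set Ordinal} (h : X ⊆ Y) : accPts X ⊆ accPts Y := by
  intro α hα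
  refine ⟨hα.1, fun x hx => ?_⟩
  obtain ⟨y, hy, h1, h2⟩ := hα.2 x hx
  exact ⟨y, h hy, h1, h2⟩

theorem isStatIn_mono {S T : Set Ordinal} {σ : Ordinal} (h : S ⊆ T) (hS : IsStatIn S σ) :
    IsStatIn T σ := by
  intro C hC
  obtain ⟨y, hy1, hy2⟩ := hS C hC
  exact ⟨y, h hy1, hy2⟩

/-- countably many clubs have club intersection (with the limit ordinals thrown in). -/
theorem isClubIn_lim_iInter {σ : Ordinal.{0}} (hσ : Order.IsSuccLimit σ) (hcof : ℵ₀ < σ.cof)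
    (C : ℕ → Set Ordinal) (hC : ∀ m, IsClubIn (C m) σ) :
    IsClubIn ({α | Order.IsSuccLimit α} ∩ ⋂ m, C m) σ := by
  classical
  refine ⟨fun α hα => (hC 0).1 ((Set.mem_iInter.1 hα.2) 0), ?_, ?_⟩
  · -- unbounded
    intro a ha
    -- build an ω-chain
    have hnext : ∀ p : {o : Ordinal // o < σ}, ∀ m : ℕ,
        ∃ q : {o : Ordinal // o < σ}, p.1 < q.1 ∧ q.1 ∈ C m := by
      rintro ⟨p, hp⟩ m
      obtain ⟨β, hβC, hβ⟩ := (hC m).2.1 (p + 1) (hσ.succ_lt hp)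
      refine ⟨⟨β, (hC m).1 hβC⟩, ?_, hβC⟩
      calc p < p + 1 := by rw [Ordinal.add_one_eq_succ]; exact Order.lt_succ p
        _ ≤ β := hβ
    set c : ℕ → {o : Ordinal // o < σ} := fun n => Nat.rec ⟨a, ha⟩
      (fun n p => (hnext p (n.unpair.1)).choose) n with hc
    have hcsucc : ∀ n : ℕ, (c n).1 < (c (n+1)).1 ∧ (c (n+1)).1 ∈ C (n.unpair.1) := by
      intro n
      exact (hnext (c n) (n.unpair.1)).choose_spec
    have hcmono : ∀ {m n : ℕ}, m < n → (c m).1 < (c n).1 := by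
      intro m n h
      induction n with
      | zero => exact absurd h (Nat.not_lt_zero m)
      | succ n ih =>
        rcases Nat.lt_succ_iff_lt_or_eq.1 h with h' | h'
        · exact lt_trans (ih h') (hcsucc n).1
        · rw [h']; exact (hcsucc n).1
    set s := ⨆ n, (c n).1 with hs
    have hsσ : s < σ := by
      rw [hs]
      apply Ordinal.iSup_lt_ord ?_ (fun n => (c n).2)
      rwa [Cardinal.mk_eq_aleph0]
    have hles : ∀ n, (c n).1 ≤ s := fun n => Ordinal.le_iSup (fun n => (c n).1) n
    have hlts : ∀ n, (c n).1 < s := fun n => lt_of_lt_of_le (hcsucc n).1 (hles (n+1))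
    have hacc : ∀ m, s ∈ accPts (C m) := by
      intro m
      refine ⟨lt_of_le_of_lt (zero_le) (hlts 0), fun y hy => ?_⟩
      obtain ⟨n, hn⟩ := Ordinal.lt_iSup_iff.1 hy
      set n' := Nat.pair m (n + 1) with hn'
      refine ⟨(c (n'+1)).1, (by
        have := (hcsucc n').2
        rwa [hn', Nat.unpair_pair] at this), ?_, hlts (n'+1)⟩
      calc y < (c n).1 := hn
        _ ≤ (c n').1 := by
          rcases Nat.lt_or_ge n n' with h | h
          · exact (hcmono h).le
          · have : n' = n := le_antisymm h (le_trans (Nat.le_succ n) (Nat.right_le_pair m (n+1)))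
            rw [this]
        _ < (c (n'+1)).1 := (hcsucc n').1
    have hsC : ∀ m, s ∈ C m := fun m => (hC m).2.2 s hsσ (hacc m)
    have hslim : Order.IsSuccLimit s := accPts_isLimit (hacc 0)
    exact ⟨s, ⟨hslim, Set.mem_iInter.2 hsC⟩, le_trans (le_of_lt (hlts 0)) (le_refl s)⟩
  · -- closed
    intro α hα hacc
    have h1 : ∀ m, α ∈ accPts (C m) :=
      fun m => accPts_mono (fun y hy => (Set.mem_iInter.1 hy.2) m) hacc
    exact ⟨accPts_isLimit hacc, Set.mem_iInter.2 fun m => (hC m).2.2 α hα (h1 m)⟩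

/-! ### Ultrafilter helper lemmas -/

namespace UF
variable {κ μ : Cardinal.{0}} {U : Set (Set (Pk κ μ))} (hU : IsNormalFineUF κ μ U)
include hU

theorem up {A B : Set (Pk κ μ)} (hA : A ∈ U) (hAB : A ⊆ B) : B ∈ U := hU.2.2.1 A B hA hAB
theorem inter {A B : Set (Pk κ μ)} (hA : A ∈ U) (hB : B ∈ U) : A ∩ B ∈ U := hU.2.2.2.1 A B hA hB
theorem ultra (A : Set (Pk κ μ)) : A ∈ U ∨ (Set.univ \ A) ∈ U := hU.2.2.2.2.1 A
theorem comp : ∀ o : Ordinal, o < κ.ord → ∀ f : Ordinal → Set (Pk κ μ),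
    (∀ i, i < o → f i ∈ U) → {x | ∀ i, i < o → x ∈ f i} ∈ U := hU.2.2.2.2.2.1
theorem fine {α : Ordinal} (h : α < μ.ord) : {x : Pk κ μ | α ∈ x.val} ∈ U :=
  hU.2.2.2.2.2.2.1 α h
theorem norm : ∀ F : Pk κ μ → Ordinal, {x | F x ∈ x.val} ∈ U → ∃ α, {x | F x = α} ∈ U :=
  hU.2.2.2.2.2.2.2

theorem nonempty {A : Set (Pk κ μ)} (hA : A ∈ U) : A.Nonempty := by
  rcases Set.eq_empty_or_nonempty A with h | h
  · exact absurd (h ▸ hA) hU.2.1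
  · exact h

theorem interSmall {T : Type 1} (hT : Cardinal.mk T < Cardinal.lift.{1} κ)
    (A : T → Set (Pk κ μ)) (hA : ∀ t, A t ∈ U) : {x | ∀ t, x ∈ A t} ∈ U := by
  classical
  obtain ⟨c, hcκ, hc⟩ := Cardinal.lt_lift_iff.1 hT
  have hoκ : c.ord < κ.ord := Cardinal.ord_lt_ord.2 hcκ
  have hmk : Cardinal.mk (Set.Iio c.ord) = Cardinal.mk T := by
    rw [Ordinal.mk_Iio_ordinal, Cardinal.card_ord, hc]
  obtain ⟨e⟩ := Cardinal.eq.1 hmk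
  set fam : Ordinal → Set (Pk κ μ) := fun i =>
    if h : i < c.ord then A (e ⟨i, h⟩) else Set.univ with hfam
  have h1 : {x | ∀ i, i < c.ord → x ∈ fam i} ∈ U := by
    apply comp hU c.ord hoκ
    intro i hi
    rw [hfam]; simp only [dif_pos hi]; exact hA _
  refine up hU h1 ?_
  intro x hx t
  have h2 := hx (e.symm t).1 (e.symm t).2
  rw [hfam] at h2
  simp only at h2
  rw [dif_pos (show ((e.symm t : Set.Iio c.ord) : Ordinal) < c.ord from (e.symm t).2)] at h2
  have h3 : (⟨(e.symm t).1, (e.symm t).2⟩ : Set.Iio c.ord) = e.symm t := rfl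
  rw [h3, e.apply_symm_apply] at h2
  exact h2

theorem diag (A : Ordinal → Set (Pk κ μ)) (hA : ∀ α < μ.ord, A α ∈ U) :
    {x | ∀ α ∈ x.val, x ∈ A α} ∈ U := by
  classical
  by_contra h
  have hcomp : Set.univ \ {x | ∀ α ∈ x.val, x ∈ A α} ∈ U := (ultra hU _).resolve_left h
  set F : Pk κ μ → Ordinal := fun x =>
    if hx : ∃ α, α ∈ x.val ∧ x ∉ A α then hx.choose else 0 with hF
  have hFx : ∀ x : Pk κ μ, x ∉ {x : Pk κ μ | ∀ α ∈ x.val, x ∈ A α} →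
      F x ∈ x.val ∧ x ∉ A (F x) := by
    intro x hx
    have hex : ∃ α, α ∈ x.val ∧ x ∉ A α := by
      simp only [Set.mem_setOf_eq, not_forall] at hx
      obtain ⟨α, hα, hna⟩ := hx
      exact ⟨α, hα, hna⟩
    rw [hF]; simp only [dif_pos hex]
    exact hex.choose_spec
  have hFU : {x | F x ∈ x.val} ∈ U := by
    refine up hU hcomp fun x hx => (hFx x hx.2).1
  obtain ⟨α₀, hα₀⟩ := norm hU F hFU
  have hW : (Set.univ \ {x | ∀ α ∈ x.val, x ∈ A α}) ∩ {x | F x = α₀} ∈ U :=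
    inter hU hcomp hα₀
  obtain ⟨x₀, hx₀⟩ := nonempty hU hW
  have hα₀μ : α₀ < μ.ord := x₀.2.1 (hx₀.2 ▸ (hFx x₀ hx₀.1.2).1)
  have hW' := inter hU hW (hA α₀ hα₀μ)
  obtain ⟨x₁, hx₁⟩ := nonempty hU hW'
  exact (hx₁.1.2 ▸ (hFx x₁ hx₁.1.1.2).2) hx₁.2

theorem keyPD {A : Set (Pk κ μ)} (hA : A ∈ U) (g : Pk κ μ → Ordinal)
    (hg : ∀ x ∈ A, g x < otp x.val) :
    ∃ α, α < μ.ord ∧ {x | g x = otp (x.val ∩ Set.Iio α)} ∈ U := by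
  classical
  set F : Pk κ μ → Ordinal := fun x =>
    if hx : ∃ ξ, ξ ∈ x.val ∧ otp (x.val ∩ Set.Iio ξ) = g x then hx.choose else 0 with hF
  have hFx : ∀ x ∈ A, F x ∈ x.val ∧ otp (x.val ∩ Set.Iio (F x)) = g x := by
    intro x hx
    have hex : ∃ ξ, ξ ∈ x.val ∧ otp (x.val ∩ Set.Iio ξ) = g x := by
      obtain ⟨ξ, h1, h2⟩ := otp_surj x.2.1 (hg x hx)
      exact ⟨ξ, h1, h2⟩
    rw [hF]; simp only [dif_pos hex]
    exact hex.choose_spec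
  have hFU : {x | F x ∈ x.val} ∈ U := up hU hA fun x hx => (hFx x hx).1
  obtain ⟨α, hα⟩ := norm hU F hFU
  have hW := inter hU hA hα
  obtain ⟨x₀, hx₀⟩ := nonempty hU hW
  refine ⟨α, x₀.2.1 (hx₀.2 ▸ (hFx x₀ hx₀.1).1), ?_⟩
  refine up hU hW fun x hx => ?_
  have h5 := (hFx x hx.1).2
  rw [hx.2] at h5
  exact h5.symm

theorem closure_arity : ∀ (k : ℕ) (g : (Fin k → Ordinal) → Ordinal),
    (∀ v, (∀ j, v j < μ.ord) → g v < μ.ord) →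
    {x : Pk κ μ | ∀ v : Fin k → Ordinal, (∀ j, v j ∈ x.val) → g v ∈ x.val} ∈ U := by
  intro k
  induction k with
  | zero =>
    intro g hg
    refine up hU (fine hU (hg (fun j => j.elim0) (fun j => j.elim0))) ?_
    intro x hx v hv
    have hv0 : v = fun j => j.elim0 := Subsingleton.elim _ _
    rw [hv0]; exact hx
  | succ k ih =>
    intro g hg
    classical
    set A : Ordinal → Set (Pk κ μ) := fun α =>
      if α < μ.ord then
        {x | ∀ v : Fin k → Ordinal, (∀ j, v j ∈ x.val) → g (Fin.cons α v) ∈ x.val}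
      else Set.univ with hA
    have hAU : ∀ α < μ.ord, A α ∈ U := by
      intro α hα
      rw [hA]; simp only [if_pos hα]
      apply ih
      intro v hv
      apply hg
      intro j
      refine Fin.cases ?_ ?_ j
      · exact hα
      · exact hv
    have hD := diag hU A hAU
    refine up hU hD ?_
    intro x hx v hv
    have h0 : v 0 ∈ x.val := hv 0
    have hμ : v 0 < μ.ord := x.2.1 h0
    have h1 := hx (v 0) h0
    rw [hA] at h1; simp only [if_pos hμ] at h1
    have h2 := h1 (Fin.tail v) (fun j => hv j.succ)
    rwa [Fin.cons_self_tail] at h2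

theorem closedOps {ι : Type} (n : ι → ℕ) (f : ∀ i, (Fin (n i) → Ordinal) → Ordinal)
    (hf : ∀ i v, (∀ j, v j < μ.ord) → f i v < μ.ord)
    (hι : Cardinal.lift.{1} (Cardinal.mk ι) < Cardinal.lift.{1} κ) :
    {x : Pk κ μ | ClosedUnderOps n f x.val} ∈ U := by
  have h := interSmall hU (T := ULift ι) (by rwa [Cardinal.mk_uLift])
    (fun t => {x : Pk κ μ | ∀ v : Fin (n t.down) → Ordinal,
      (∀ j, v j ∈ x.val) → f t.down v ∈ x.val})
    (fun t => closure_arity hU (n t.down) (f t.down) (hf t.down))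
  refine up hU h ?_
  intro x hx i v hv
  exact hx ⟨i⟩ v hv

end UF
namespace UF
variable {κ μ : Cardinal.{0}} {U : Set (Set (Pk κ μ))} (hU : IsNormalFineUF κ μ U)
include hU

theorem otpReg (hμ : ℵ₀ ≤ μ) (hregμ : μ.ord.cof = μ) :
    {x : Pk κ μ | (otp x.val).cof.ord = otp x.val} ∈ U := by
  classical
  by_contra hcon
  set R := {x : Pk κ μ | (otp x.val).cof.ord = otp x.val} with hR
  have hA : Set.univ \ R ∈ U := (ultra hU R).resolve_left hcon
  have hμord : Order.IsSuccLimit μ.ord := Cardinal.isSuccLimit_ord hμ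
  -- o(x).cof.ord < o(x) on A
  have hth : ∀ x : Pk κ μ, x ∈ Set.univ \ R → (otp x.val).cof.ord < otp x.val := by
    intro x hx
    refine lt_of_le_of_ne ?_ ?_
    · exact le_trans (Cardinal.ord_le_ord.2 (Ordinal.cof_le_card _)) (Cardinal.ord_card_le _)
    · exact fun h => hx.2 h
  obtain ⟨α₁, hα₁μ, hB₁⟩ := keyPD hU hA (fun x => (otp x.val).cof.ord) hth
  -- the per-x cofinal functions
  set G : Pk κ μ → Ordinal → Ordinal := fun x =>
    if h : 0 < otp x.val then (exists_cofinal_fun _ h).choose else fun _ => 0 with hG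
  have hGspec : ∀ x : Pk κ μ, 0 < otp x.val →
      (∀ i, G x i < otp x.val) ∧ ∀ t < otp x.val, ∃ i < (otp x.val).cof.ord, t ≤ G x i := by
    intro x hx
    rw [hG]; simp only [dif_pos hx]
    exact (exists_cofinal_fun _ hx).choose_spec
  -- the zero set
  have h0U : {x : Pk κ μ | (0 : Ordinal) ∈ x.val} ∈ U := fine hU hμord.pos
  have h0pos : ∀ x : Pk κ μ, (0 : Ordinal) ∈ x.val → 0 < otp x.val :=
    fun x hx => otp_pos x.2.1 hx
  -- canonical representation of the composed functions
  have hkey : ∀ β : Ordinal, β < α₁ → ∃ γ, γ < μ.ord ∧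
      {x : Pk κ μ | G x (otp (x.val ∩ Set.Iio β)) = otp (x.val ∩ Set.Iio γ)} ∈ U := by
    intro β _
    have hAU : (Set.univ \ R) ∩ {x : Pk κ μ | (0 : Ordinal) ∈ x.val} ∈ U := inter hU hA h0U
    refine keyPD hU hAU _ ?_
    intro x hx
    exact (hGspec x (h0pos x hx.2)).1 _
  choose hfun hfun1 hfun2 using hkey
  -- bound the γ's
  set e₁ := (Ordinal.ToType.mk : Set.Iio α₁ ≃o α₁.ToType) with he₁
  set γsup : Ordinal := ⨆ t : α₁.ToType, hfun (e₁.symm t).1 (e₁.symm t).2 with hγsup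
  have hγsupμ : γsup < μ.ord := by
    rw [hγsup]
    apply Ordinal.iSup_lt_ord ?_ (fun t => hfun1 _ _)
    rw [Cardinal.mk_toType, hregμ]
    exact Cardinal.lt_ord.1 hα₁μ
  have hle : ∀ (β : Ordinal) (hβ : β < α₁), hfun β hβ ≤ γsup := by
    intro β hβ
    have h4 := Ordinal.le_iSup (fun t : α₁.ToType => hfun (e₁.symm t).1 (e₁.symm t).2)
      (e₁ ⟨β, hβ⟩)
    have h5 : e₁.symm (e₁ ⟨β, hβ⟩) = ⟨β, hβ⟩ := e₁.symm_apply_apply _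
    rw [h5] at h4
    exact h4
  set γs := γsup + 1 with hγs
  set γss := γsup + 1 + 1 with hγss
  have hγsμ : γs < μ.ord := hμord.succ_lt hγsupμ
  have hγssμ : γss < μ.ord := hμord.succ_lt hγsμ
  -- the diagonal set
  set D : Ordinal → Set (Pk κ μ) := fun β =>
    if hβ : β < α₁ then
      {x : Pk κ μ | G x (otp (x.val ∩ Set.Iio β)) = otp (x.val ∩ Set.Iio (hfun β hβ))}
    else Set.univ with hD
  have hDU : {x : Pk κ μ | ∀ β ∈ x.val, x ∈ D β} ∈ U := by
    apply diag hU
    intro β _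
    rw [hD]
    by_cases hβ : β < α₁
    · simp only [dif_pos hβ]; exact hfun2 β hβ
    · simp only [dif_neg hβ]; exact hU.1
  -- pick a single x
  have hbig : (Set.univ \ R) ∩ ({x | G x (otp (x.val ∩ Set.Iio α₁)) = otp (x.val ∩ Set.Iio (0:Ordinal))} ∪ Set.univ) ∈ U := by
    -- dummy; not used
    exact up hU hA (fun x hx => ⟨hx, Or.inr (Set.mem_univ _)⟩)
  have hall : ((((Set.univ \ R) ∩ {x | (otp x.val).cof.ord = otp (x.val ∩ Set.Iio α₁)}) ∩
      {x : Pk κ μ | (0 : Ordinal) ∈ x.val}) ∩ {x : Pk κ μ | ∀ β ∈ x.val, x ∈ D β}) ∩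
      ({x : Pk κ μ | γs ∈ x.val} ∩ {x : Pk κ μ | γss ∈ x.val}) ∈ U := by
    exact inter hU (inter hU (inter hU (inter hU hA hB₁) h0U) hDU)
      (inter hU (fine hU hγsμ) (fine hU hγssμ))
  obtain ⟨x, hx⟩ := nonempty hU hall
  obtain ⟨⟨⟨⟨hxA, hxB₁⟩, hx0⟩, hxD⟩, hxγs, hxγss⟩ := hx
  set s := x.val with hs
  have hsub : s ⊆ Set.Iio μ.ord := x.2.1
  have hopos : 0 < otp s := h0pos x hx0
  have hocof : (otp s).cof.ord < otp s := hth x hxA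
  obtain ⟨hG1, hG2⟩ := hGspec x hopos
  -- c* and c**
  set cs := otp (s ∩ Set.Iio γs) with hcs
  set css := otp (s ∩ Set.Iio γss) with hcss
  have hlt1 : ∀ a : Ordinal, a < a + 1 := fun a => by
    rw [Ordinal.add_one_eq_succ]; exact Order.lt_succ a
  have hcscss : cs < css := otp_inter_lt_inter hsub hxγs (hlt1 _)
  have hcsso : css < otp s := otp_lt_of_mem hsub hxγss
  -- every t < otp s is ≤ cs
  have hmain : ∀ t < otp s, t ≤ cs := by
    intro t ht
    obtain ⟨i, hi, hti⟩ := hG2 t ht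
    rw [hxB₁] at hi
    obtain ⟨ξ, hξ, hξi⟩ := otp_surj (Set.inter_subset_left.trans hsub) hi
    rw [inter_Iio_inter_Iio hξ.2.le] at hξi
    have hmemD := hxD ξ hξ.1
    rw [hD] at hmemD
    simp only at hmemD
    rw [dif_pos (show ξ < α₁ from hξ.2)] at hmemD
    have h7 : G x i = otp (s ∩ Set.Iio (hfun ξ hξ.2)) := by
      rw [← hξi]; exact hmemD
    have h8 : otp (s ∩ Set.Iio (hfun ξ hξ.2)) ≤ cs := by
      rw [hcs]
      refine otp_mono (Set.inter_subset_left.trans hsub) ?_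
      refine Set.inter_subset_inter_right _ ?_
      intro y hy
      exact lt_of_lt_of_le hy (le_trans (hle ξ hξ.2) (hlt1 γsup).le)
    exact le_trans hti (h7 ▸ h8)
  exact absurd (hmain css hcsso) (not_le.2 hcscss)

end UF
namespace UF
variable {κ μ : Cardinal.{0}} {U : Set (Set (Pk κ μ))} (hU : IsNormalFineUF κ μ U)
include hU

theorem supEq {α : Ordinal} (hαμ : α < μ.ord) (hlim : Order.IsSuccLimit α) (hcof : α.cof < κ) :
    {x : Pk κ μ | sSup (x.val ∩ Set.Iio α) = α} ∈ U := by
  obtain ⟨ι, f, hlsub, hι⟩ := Ordinal.exists_lsub_cof α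
  have hflt : ∀ i, f i < α := fun i => hlsub ▸ Ordinal.lt_lsub f i
  have h1 : {x : Pk κ μ | ∀ t : ULift.{1} ι, x ∈ {x : Pk κ μ | f t.down ∈ x.val}} ∈ U := by
    apply interSmall hU
    · rw [Cardinal.mk_uLift, hι]; exact Cardinal.lift_lt.2 hcof
    · intro t; exact fine hU (lt_trans (hflt t.down) hαμ)
  refine up hU h1 ?_
  intro x hx
  have hle : sSup (x.val ∩ Set.Iio α) ≤ α := sSup_inter_Iio_le _ _
  refine le_antisymm hle ?_
  by_contra hlt
  push_neg at hlt
  have hs1 : Order.succ (sSup (x.val ∩ Set.Iio α)) < α := hlim.succ_lt hlt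
  obtain ⟨i, hi⟩ := Ordinal.lt_lsub_iff.1 (show Order.succ (sSup (x.val ∩ Set.Iio α)) <
    Ordinal.lsub f from hlsub.symm ▸ hs1)
  have hfx : f i ∈ x.val := hx ⟨i⟩
  have hsup : f i ≤ sSup (x.val ∩ Set.Iio α) :=
    le_csSup (bddAbove_of_subset_Iio (Set.inter_subset_left.trans x.2.1)) ⟨hfx, hflt i⟩
  exact absurd (le_trans hi hsup) (not_le.2 (Order.lt_succ _))

theorem statGood (hℵκ : ℵ₀ < κ) (hℵμ : ℵ₀ < μ) (hregμ : μ.ord.cof = μ)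
    (S' : Set Ordinal) (hSsub : S' ⊆ Set.Iio μ.ord)
    (hScof : ∀ α ∈ S', Order.IsSuccLimit α ∧ α.cof < κ)
    (hstat : IsStatIn S' μ.ord) :
    {x : Pk κ μ | IsStatIn (S' ∩ x.val) (sSup x.val)} ∈ U := by
  classical
  have hμ : ℵ₀ ≤ μ := hℵμ.le
  have hμord : Order.IsSuccLimit μ.ord := Cardinal.isSuccLimit_ord hμ
  have hlt1 : ∀ a : Ordinal, a < a + 1 := fun a => by
    rw [Ordinal.add_one_eq_succ]; exact Order.lt_succ a
  have hsucclt : ∀ a : Ordinal, a < μ.ord → a + 1 < μ.ord := fun a ha => by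
    rw [Ordinal.add_one_eq_succ]; exact hμord.succ_lt ha
  by_contra hcon
  set GOOD := {x : Pk κ μ | IsStatIn (S' ∩ x.val) (sSup x.val)} with hGOOD
  have hBAD : Set.univ \ GOOD ∈ U := (ultra hU GOOD).resolve_left hcon
  have hCex : ∀ x : Pk κ μ, x ∈ Set.univ \ GOOD → ∃ C : Set Ordinal,
      IsClubIn C (sSup x.val) ∧ S' ∩ x.val ∩ C = ∅ := by
    intro x hx
    have h1 : ¬ IsStatIn (S' ∩ x.val) (sSup x.val) := hx.2
    rw [IsStatIn] at h1; push_neg at h1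
    obtain ⟨C, hC1, hC2⟩ := h1
    exact ⟨C, hC1, hC2⟩
  set Cf : Pk κ μ → Set Ordinal := fun x =>
    if hx : x ∈ Set.univ \ GOOD then (hCex x hx).choose else Set.univ with hCf
  have hCf1 : ∀ x ∈ Set.univ \ GOOD,
      IsClubIn (Cf x) (sSup x.val) ∧ S' ∩ x.val ∩ Cf x = ∅ := by
    intro x hx; rw [hCf]; simp only [dif_pos hx]; exact (hCex x hx).choose_spec
  set E := {α : Ordinal | 0 < α ∧ α < μ.ord ∧
    {x : Pk κ μ | sSup (x.val ∩ Set.Iio α) ∈ Cf x} ∈ U} with hE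
  -- Step A
  have hstepA : ∀ α ∈ S', α ∉ E := by
    intro α hαS hαE
    have hW : (Set.univ \ GOOD) ∩ ({x : Pk κ μ | sSup (x.val ∩ Set.Iio α) ∈ Cf x} ∩
        ({x : Pk κ μ | sSup (x.val ∩ Set.Iio α) = α} ∩ {x : Pk κ μ | α ∈ x.val})) ∈ U := by
      refine inter hU hBAD (inter hU hαE.2.2 (inter hU ?_ (fine hU (hSsub hαS))))
      exact supEq hU (hSsub hαS) (hScof α hαS).1 (hScof α hαS).2
    obtain ⟨x, hx⟩ := nonempty hU hW
    obtain ⟨hx1, hx2, hx3, hx4⟩ := hx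
    have hx2' : sSup (x.val ∩ Set.Iio α) ∈ Cf x := hx2
    have hx3' : sSup (x.val ∩ Set.Iio α) = α := hx3
    rw [hx3'] at hx2'
    have hmem : α ∈ S' ∩ x.val ∩ Cf x := ⟨⟨hαS, hx4⟩, hx2'⟩
    rw [(hCf1 x hx1).2] at hmem
    exact hmem
  -- Step B
  have hstepB : ∀ α ∈ S', α ∉ accPts E := by
    intro α hαS hαacc
    obtain ⟨hαlim, hαcof⟩ := hScof α hαS
    have hαμ : α < μ.ord := hSsub hαS
    obtain ⟨ι, f, hlsub, hι⟩ := Ordinal.exists_lsub_cof α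
    have hflt : ∀ i, f i < α := fun i => hlsub ▸ Ordinal.lt_lsub f i
    have hei : ∀ i : ι, ∃ y ∈ E, f i < y ∧ y < α := fun i => hαacc.2 (f i) (hflt i)
    choose ef hef1 hef2 hef3 using hei
    have hint : {x : Pk κ μ | ∀ t : ULift.{1} ι,
        x ∈ {x : Pk κ μ | sSup (x.val ∩ Set.Iio (ef t.down)) ∈ Cf x}} ∈ U := by
      apply interSmall hU
      · rw [Cardinal.mk_uLift, hι]; exact Cardinal.lift_lt.2 hαcof
      · intro t; exact (hef1 t.down).2.2
    have hW : (Set.univ \ GOOD) ∩ ({x : Pk κ μ | ∀ t : ULift.{1} ι,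
        x ∈ {x : Pk κ μ | sSup (x.val ∩ Set.Iio (ef t.down)) ∈ Cf x}} ∩
        ({x : Pk κ μ | sSup (x.val ∩ Set.Iio α) = α} ∩
        ({x : Pk κ μ | α ∈ x.val} ∩ {x : Pk κ μ | α + 1 ∈ x.val}))) ∈ U := by
      refine inter hU hBAD (inter hU hint (inter hU ?_
        (inter hU (fine hU hαμ) (fine hU (hsucclt α hαμ)))))
      exact supEq hU hαμ hαlim hαcof
    obtain ⟨x, hx⟩ := nonempty hU hW
    obtain ⟨hxB, hxint, hxsup, hxα, hxα1⟩ := hx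
    have hxsup' : sSup (x.val ∩ Set.Iio α) = α := hxsup
    have hbdd : BddAbove x.val := bddAbove_of_subset_Iio x.2.1
    have hσα : α < sSup x.val :=
      lt_of_lt_of_le (hlt1 α) (le_csSup hbdd hxα1)
    have haccC : α ∈ accPts (Cf x) := by
      refine ⟨hαlim.pos, fun y hy => ?_⟩
      have hξex : ∃ ξ, (ξ ∈ x.val ∧ ξ < α) ∧ y < ξ := by
        by_contra hc; push_neg at hc
        have hle : sSup (x.val ∩ Set.Iio α) ≤ y :=
          csSup_le' (fun z hz => hc z ⟨hz.1, hz.2⟩)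
        rw [hxsup'] at hle
        exact absurd hy (not_lt.2 hle)
      obtain ⟨ξ, ⟨hξx, hξα⟩, hξy⟩ := hξex
      obtain ⟨i, hi⟩ := Ordinal.lt_lsub_iff.1 (show ξ < Ordinal.lsub f from hlsub.symm ▸ hξα)
      refine ⟨sSup (x.val ∩ Set.Iio (ef i)), hxint ⟨i⟩, ?_, ?_⟩
      · exact lt_of_lt_of_le hξy (le_csSup (bddAbove_of_subset_Iio
          (Set.inter_subset_left.trans x.2.1)) ⟨hξx, lt_of_le_of_lt hi (hef2 i)⟩)
      · exact lt_of_le_of_lt (sSup_inter_Iio_le _ _) (hef3 i)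
    have hαC : α ∈ Cf x := (hCf1 x hxB).1.2.2 α hσα haccC
    have hmem : α ∈ S' ∩ x.val ∩ Cf x := ⟨⟨hαS, hxα⟩, hαC⟩
    rw [(hCf1 x hxB).2] at hmem
    exact hmem
  -- Step C precursor: one step
  have hstep : ∀ β : Ordinal, β < μ.ord → ∃ β', β' < μ.ord ∧ β < β' ∧
      {x : Pk κ μ | sSup (x.val ∩ Set.Iio β) < sSup (x.val ∩ Set.Iio β') ∧
        ∃ c ∈ Cf x, sSup (x.val ∩ Set.Iio β) ≤ c ∧ c < sSup (x.val ∩ Set.Iio β')} ∈ U := by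
    intro β hβμ
    set W := (Set.univ \ GOOD) ∩ {x : Pk κ μ | β + 1 ∈ x.val} with hWdef
    have hWU : W ∈ U := inter hU hBAD (fine hU (hsucclt β hβμ))
    have hWfact : ∀ x ∈ W, sSup (x.val ∩ Set.Iio β) < sSup x.val := by
      intro x hx
      calc sSup (x.val ∩ Set.Iio β) ≤ β := sSup_inter_Iio_le _ _
        _ < β + 1 := hlt1 β
        _ ≤ sSup x.val := le_csSup (bddAbove_of_subset_Iio x.2.1) hx.2
    set g : Pk κ μ → Ordinal := fun x =>
      sInf (Cf x ∩ {c | sSup (x.val ∩ Set.Iio β) ≤ c}) with hg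
    have hgspec : ∀ x ∈ W, g x ∈ Cf x ∧ sSup (x.val ∩ Set.Iio β) ≤ g x ∧
        g x < sSup x.val := by
      intro x hx
      have hclub := (hCf1 x hx.1).1
      obtain ⟨c, hc1, hc2⟩ := hclub.2.1 _ (hWfact x hx)
      have hne : (Cf x ∩ {c | sSup (x.val ∩ Set.Iio β) ≤ c}).Nonempty := ⟨c, hc1, hc2⟩
      have hmem := csInf_mem hne
      exact ⟨hmem.1, hmem.2, hclub.1 hmem.1⟩
    set h : Pk κ μ → Ordinal := fun x => sInf {ξ | ξ ∈ x.val ∧ g x < ξ} with hh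
    have hhspec : ∀ x ∈ W, h x ∈ x.val ∧ g x < h x := by
      intro x hx
      have hne : {ξ | ξ ∈ x.val ∧ g x < ξ}.Nonempty := by
        by_contra hc
        rw [Set.not_nonempty_iff_eq_empty] at hc
        have hub : sSup x.val ≤ g x := by
          apply csSup_le'
          intro ξ hξ
          by_contra hgt; push_neg at hgt
          have : ξ ∈ {ξ | ξ ∈ x.val ∧ g x < ξ} := ⟨hξ, hgt⟩
          rw [hc] at this
          exact this
        exact absurd (hgspec x hx).2.2 (not_lt.2 hub)
      have hm := csInf_mem hne
      exact ⟨hm.1, hm.2⟩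
    obtain ⟨ξ₀, hξ₀⟩ := norm hU h (up hU hWU (fun x hx => (hhspec x hx).1))
    obtain ⟨x₂, hx₂⟩ := nonempty hU (inter hU hWU hξ₀)
    have hξ₀x : h x₂ = ξ₀ := hx₂.2
    have hξ₀μ : ξ₀ < μ.ord := x₂.2.1 (hξ₀x ▸ (hhspec x₂ hx₂.1).1)
    refine ⟨max (ξ₀ + 1) (β + 1 + 1), ?_, ?_, ?_⟩
    · exact max_lt (hsucclt _ hξ₀μ) (hsucclt _ (hsucclt _ hβμ))
    · exact lt_of_lt_of_le (lt_trans (hlt1 β) (hlt1 (β+1))) (le_max_right _ _)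
    · refine up hU (inter hU hWU hξ₀) ?_
      intro x hx
      obtain ⟨hxW, hxξ⟩ := hx
      have hg3 := hgspec x hxW
      have hh3 := hhspec x hxW
      have hxξ' : h x = ξ₀ := hxξ
      have hξx : ξ₀ ∈ x.val := hxξ' ▸ hh3.1
      have hgξ : g x < ξ₀ := hxξ' ▸ hh3.2
      have hβx : β + 1 ∈ x.val := hxW.2
      have hbdd : BddAbove (x.val ∩ Set.Iio (max (ξ₀+1) (β+1+1))) :=
        bddAbove_of_subset_Iio (Set.inter_subset_left.trans x.2.1)
      have hsup1 : ξ₀ ≤ sSup (x.val ∩ Set.Iio (max (ξ₀+1) (β+1+1))) :=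
        le_csSup hbdd ⟨hξx, lt_of_lt_of_le (hlt1 _) (le_max_left _ _)⟩
      have hsup2 : β + 1 ≤ sSup (x.val ∩ Set.Iio (max (ξ₀+1) (β+1+1))) :=
        le_csSup hbdd ⟨hβx, lt_of_lt_of_le (hlt1 _) (le_max_right _ _)⟩
      constructor
      · exact lt_of_le_of_lt (sSup_inter_Iio_le _ β)
          (lt_of_lt_of_le (hlt1 β) hsup2)
      · exact ⟨g x, hg3.1, hg3.2.1, lt_of_lt_of_le hgξ hsup1⟩
  -- Step C : E is unbounded
  have hstepC : ∀ a, a < μ.ord → ∃ α ∈ E, a ≤ α := by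
    intro a ha
    have hrec : ∀ p : {o : Ordinal // o < μ.ord}, ∃ q : {o : Ordinal // o < μ.ord},
        p.1 < q.1 ∧
        {x : Pk κ μ | sSup (x.val ∩ Set.Iio p.1) < sSup (x.val ∩ Set.Iio q.1) ∧
          ∃ c ∈ Cf x, sSup (x.val ∩ Set.Iio p.1) ≤ c ∧
          c < sSup (x.val ∩ Set.Iio q.1)} ∈ U := by
      rintro ⟨p, hp⟩
      obtain ⟨β', h1, h2, h3⟩ := hstep p hp
      exact ⟨⟨β', h1⟩, h2, h3⟩
    set c : ℕ → {o : Ordinal // o < μ.ord} := fun n => Nat.rec ⟨a, ha⟩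
      (fun _ p => (hrec p).choose) n with hc
    have hcs : ∀ n : ℕ, (c n).1 < (c (n+1)).1 ∧
        {x : Pk κ μ | sSup (x.val ∩ Set.Iio (c n).1) < sSup (x.val ∩ Set.Iio (c (n+1)).1) ∧
          ∃ cc ∈ Cf x, sSup (x.val ∩ Set.Iio (c n).1) ≤ cc ∧
          cc < sSup (x.val ∩ Set.Iio (c (n+1)).1)} ∈ U :=
      fun n => (hrec (c n)).choose_spec
    set α := ⨆ n, (c n).1 with hα
    have hαμ : α < μ.ord := by
      rw [hα]
      apply Ordinal.iSup_lt_ord ?_ (fun n => (c n).2)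
      rw [Cardinal.mk_eq_aleph0, hregμ]; exact hℵμ
    have hcα : ∀ n, (c n).1 ≤ α := fun n => Ordinal.le_iSup (fun n => (c n).1) n
    have hcαlt : ∀ n, (c n).1 < α := fun n => lt_of_lt_of_le (hcs n).1 (hcα (n+1))
    have hint : {x : Pk κ μ | ∀ t : ULift.{1} ℕ, x ∈
        {x : Pk κ μ | sSup (x.val ∩ Set.Iio (c t.down).1) <
          sSup (x.val ∩ Set.Iio (c (t.down+1)).1) ∧
          ∃ cc ∈ Cf x, sSup (x.val ∩ Set.Iio (c t.down).1) ≤ cc ∧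
          cc < sSup (x.val ∩ Set.Iio (c (t.down+1)).1)}} ∈ U := by
      apply interSmall hU
      · rw [Cardinal.mk_uLift, Cardinal.mk_eq_aleph0]; exact Cardinal.lift_lt.2 hℵκ
      · intro t; exact (hcs t.down).2
    have hW : (Set.univ \ GOOD) ∩ ({x : Pk κ μ | α + 1 ∈ x.val} ∩
        {x : Pk κ μ | ∀ t : ULift.{1} ℕ, x ∈
        {x : Pk κ μ | sSup (x.val ∩ Set.Iio (c t.down).1) <
          sSup (x.val ∩ Set.Iio (c (t.down+1)).1) ∧
          ∃ cc ∈ Cf x, sSup (x.val ∩ Set.Iio (c t.down).1) ≤ cc ∧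
          cc < sSup (x.val ∩ Set.Iio (c (t.down+1)).1)}}) ∈ U :=
      inter hU hBAD (inter hU (fine hU (hsucclt α hαμ)) hint)
    have hαpos : 0 < α := lt_of_le_of_lt (zero_le) (lt_of_lt_of_le (hcs 0).1 (hcα 1))
    refine ⟨α, ⟨hαpos, hαμ, ?_⟩, hcα 0⟩
    refine up hU hW ?_
    intro x hx
    obtain ⟨hxB, hxα1, hxstep⟩ := hx
    have hbdd : BddAbove (x.val ∩ Set.Iio α) :=
      bddAbove_of_subset_Iio (Set.inter_subset_left.trans x.2.1)
    set t : ℕ → Ordinal := fun n => sSup (x.val ∩ Set.Iio (c n).1) with ht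
    have hstep' : ∀ n : ℕ, t n < t (n+1) ∧ ∃ cc ∈ Cf x, t n ≤ cc ∧ cc < t (n+1) :=
      fun n => hxstep ⟨n⟩
    have hsupα : sSup (x.val ∩ Set.Iio α) = ⨆ n, t n := by
      apply le_antisymm
      · apply csSup_le'
        rintro ξ ⟨hξx, hξα⟩
        have hξα' : ξ < ⨆ n, (c n).1 := hα ▸ hξα
        obtain ⟨n, hn⟩ := Ordinal.lt_iSup_iff.1 hξα'
        refine le_trans ?_ (Ordinal.le_iSup t n)
        exact le_csSup (bddAbove_of_subset_Iio (Set.inter_subset_left.trans x.2.1)) ⟨hξx, hn⟩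
      · apply csSup_le'
        rintro z ⟨n, rfl⟩
        apply csSup_le'
        rintro ξ ⟨hξx, hξn⟩
        exact le_csSup hbdd ⟨hξx, lt_trans hξn (hcαlt n)⟩
    have hsacc : sSup (x.val ∩ Set.Iio α) ∈ accPts (Cf x) := by
      constructor
      · rw [hsupα]
        refine lt_of_le_of_lt ((zero_le (a := t 0))) ?_
        exact lt_of_lt_of_le (hstep' 0).1 (Ordinal.le_iSup t 1)
      · intro y hy
        rw [hsupα] at hy
        obtain ⟨n, hn⟩ := Ordinal.lt_iSup_iff.1 hy
        obtain ⟨cc, hcc1, hcc2, hcc3⟩ := (hstep' n).2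
        refine ⟨cc, hcc1, lt_of_lt_of_le hn hcc2, ?_⟩
        rw [hsupα]
        exact lt_of_lt_of_le hcc3 (Ordinal.le_iSup t (n+1))
    have hσ : sSup (x.val ∩ Set.Iio α) < sSup x.val :=
      lt_of_le_of_lt (sSup_inter_Iio_le _ _)
        (lt_of_lt_of_le (hlt1 α) (le_csSup (bddAbove_of_subset_Iio x.2.1) hxα1))
    exact (hCf1 x hxB).1.2.2 _ hσ hsacc
  -- Step D : contradiction
  set Ebar := E ∪ (accPts E ∩ Set.Iio μ.ord) with hEbar
  have hEclub : IsClubIn Ebar μ.ord := by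
    refine ⟨?_, ?_, ?_⟩
    · rintro y (hy | hy)
      · exact hy.2.1
      · exact hy.2
    · intro a ha
      obtain ⟨α, hα1, hα2⟩ := hstepC a ha
      exact ⟨α, Or.inl hα1, hα2⟩
    · intro γ hγ hacc
      have hγacc : γ ∈ accPts E := by
        refine ⟨hacc.1, fun y hy => ?_⟩
        obtain ⟨z, hz, hz1, hz2⟩ := hacc.2 y hy
        rcases hz with hzE | hzacc
        · exact ⟨z, hzE, hz1, hz2⟩
        · obtain ⟨w, hw, hw1, hw2⟩ := hzacc.1.2 y hz1
          exact ⟨w, hw, hw1, lt_trans hw2 hz2⟩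
      exact Or.inr ⟨hγacc, hγ⟩
  obtain ⟨α, hαS, hαE⟩ := hstat Ebar hEclub
  rcases hαE with h | h
  · exact hstepA α hαS h
  · exact hstepB α hαS h.1

end UF
/-! ### The main theorem -/

theorem isClubIn_Iio (σ : Ordinal) : IsClubIn (Set.Iio σ) σ :=
  ⟨fun _ h => h, fun α hα => ⟨α, hα, le_refl α⟩, fun α hα _ => hα⟩

/-- If `λ` is the supremum of an increasing `ω`-sequence of supercompact cardinals, then
`Δ_{λ,λ⁺}` holds: every stationary `S ⊆ E^{λ⁺}_{<λ}` reflects to a subalgebra of regular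
order type `< λ` of any given algebra on `λ⁺` with `ν < λ` many operations. -/
theorem stmt3 (κs : ℕ → Cardinal) (hmono : StrictMono κs)
    (hsc : ∀ m, IsSupercompact (κs m))
    (lam : Cardinal) (hlam : lam = ⨆ m, κs m)
    (ν : Cardinal) (hν : ν < lam)
    (ι : Type) (hι : Cardinal.mk ι = ν)
    (n : ι → ℕ) (f : ∀ i, (Fin (n i) → Ordinal) → Ordinal)
    (hf : ∀ i v, (∀ j, v j < (Order.succ lam).ord) → f i v < (Order.succ lam).ord)
    (S : Set Ordinal) (hSsub : S ⊆ Set.Iio (Order.succ lam).ord)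
    (hScof : ∀ α ∈ S, Ordinal.cof α < lam)
    (hSstat : IsStatIn S (Order.succ lam).ord) :
    ∃ B : Set Ordinal, B ⊆ Set.Iio (Order.succ lam).ord ∧ ClosedUnderOps n f B ∧
      (∃ c : Cardinal, c.IsRegular ∧ c < lam ∧ SetOType B = Ordinal.lift.{1} c.ord) ∧
      IsStatIn (S ∩ B) (sSup B) := by
  classical
  -- basic facts about lam and μ := succ lam
  have hbdd : BddAbove (Set.range κs) := Cardinal.bddAbove_range κs
  have hlamle : ∀ m, κs m ≤ lam := fun m => hlam ▸ le_ciSup hbdd m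
  have hnat : ∀ m : ℕ, (m : Cardinal) ≤ κs m := by
    intro m
    induction m with
    | zero => exact zero_le
    | succ m ih =>
      have h1 : (m : Cardinal) < κs (m+1) := lt_of_le_of_lt ih (hmono (Nat.lt_succ_self m))
      have h2 : ((m+1 : ℕ) : Cardinal) = Order.succ (m : Cardinal) := Cardinal.nat_succ m
      rw [h2]
      exact Order.succ_le_of_lt h1
  have hℵlam : ℵ₀ ≤ lam :=
    Cardinal.aleph0_le.2 fun m => le_trans (hnat m) (hlamle m)
  set μ := Order.succ lam with hμdef
  have hμreg : μ.IsRegular := Cardinal.isRegular_succ hℵlam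
  have hregμ : μ.ord.cof = μ := hμreg.cof_eq
  have hlamμ : lam < μ := Order.lt_succ lam
  have hℵμ : ℵ₀ < μ := lt_of_le_of_lt hℵlam hlamμ
  have hμ : ℵ₀ ≤ μ := hℵμ.le
  have hμord : Order.IsSuccLimit μ.ord := Cardinal.isSuccLimit_ord hμ
  have hcofμ : ℵ₀ < μ.ord.cof := by rw [hregμ]; exact hℵμ
  -- find a good index m
  set Sm : ℕ → Set Ordinal := fun m => {α | α ∈ S ∧ Order.IsSuccLimit α ∧ α.cof < κs m} with hSm
  have hexm : ∃ m₀, IsStatIn (Sm m₀) μ.ord := by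
    by_contra hcon
    push_neg at hcon
    have hD : ∀ m, ∃ D, IsClubIn D μ.ord ∧ Sm m ∩ D = ∅ := by
      intro m
      have h1 := hcon m
      rw [IsStatIn] at h1; push_neg at h1
      obtain ⟨D, hD1, hD2⟩ := h1
      exact ⟨D, hD1, hD2⟩
    choose D hD1 hD2 using hD
    have hclub := isClubIn_lim_iInter hμord hcofμ D hD1
    obtain ⟨α, hα1, hα2, hα3⟩ := hSstat _ hclub
    have hαcof : α.cof < lam := hScof α hα1
    have hexm' : ∃ m, α.cof < κs m := by
      by_contra hc; push_neg at hc
      have : lam ≤ α.cof := hlam ▸ ciSup_le hc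
      exact absurd hαcof (not_lt.2 this)
    obtain ⟨m, hm⟩ := hexm'
    have : α ∈ Sm m ∩ D m := ⟨⟨hα1, hα2, hm⟩, Set.mem_iInter.1 hα3 m⟩
    rw [hD2 m] at this
    exact this
  obtain ⟨m₀, hm₀⟩ := hexm
  have hexm1 : ∃ m₁, ν < κs m₁ := by
    by_contra hc; push_neg at hc
    exact absurd hν (not_lt.2 (hlam ▸ ciSup_le hc))
  obtain ⟨m₁, hm₁⟩ := hexm1
  set m := max m₀ m₁ with hm
  set κ := κs m with hκ
  set S' := Sm m with hS'
  have hS'stat : IsStatIn S' μ.ord := by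
    refine isStatIn_mono ?_ hm₀
    intro α hα
    exact ⟨hα.1, hα.2.1, lt_of_lt_of_le hα.2.2 (hmono.monotone (le_max_left m₀ m₁))⟩
  have hνκ : ν < κ := lt_of_lt_of_le hm₁ (hmono.monotone (le_max_right m₀ m₁))
  have hS'sub : S' ⊆ Set.Iio μ.ord := fun α hα => hSsub hα.1
  have hS'cof : ∀ α ∈ S', Order.IsSuccLimit α ∧ α.cof < κ := fun α hα => ⟨hα.2.1, hα.2.2⟩
  -- S' is nonempty, hence κ > ℵ₀
  obtain ⟨α₀, hα₀S, _⟩ := hS'stat _ (isClubIn_Iio μ.ord)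
  have hℵκ : ℵ₀ < κ :=
    lt_of_le_of_lt (Ordinal.aleph0_le_cof.2 hα₀S.2.1) hα₀S.2.2
  have hκμ : κ ≤ μ := le_trans (hlamle m) hlamμ.le
  have hκlam : κ < lam := lt_of_lt_of_le (hmono (Nat.lt_succ_self m)) (hlamle (m+1))
  -- get the ultrafilter
  obtain ⟨U, hU⟩ := hsc m μ hκμ
  -- the U-large sets
  have hclosed : {x : Pk κ μ | ClosedUnderOps n f x.val} ∈ U :=
    UF.closedOps hU n f hf (Cardinal.lift_lt.2 (hι ▸ hνκ))
  have hreg : {x : Pk κ μ | (otp x.val).cof.ord = otp x.val} ∈ U :=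
    UF.otpReg hU hμ hregμ
  have hstatU : {x : Pk κ μ | IsStatIn (S' ∩ x.val) (sSup x.val)} ∈ U :=
    UF.statGood hU hℵκ hℵμ hregμ S' hS'sub hS'cof hS'stat
  have homega : {x : Pk κ μ | ∀ t : ULift.{1} ℕ,
      x ∈ {x : Pk κ μ | ((t.down : ℕ) : Ordinal) ∈ x.val}} ∈ U := by
    apply UF.interSmall hU
    · rw [Cardinal.mk_uLift, Cardinal.mk_eq_aleph0]
      exact Cardinal.lift_lt.2 hℵκ
    · intro t
      apply UF.fine hU
      refine lt_of_lt_of_le (Ordinal.nat_lt_omega0 t.down) ?_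
      rw [← Cardinal.ord_aleph0]
      exact Cardinal.ord_le_ord.2 hμ
  obtain ⟨x, hx⟩ := UF.nonempty hU (UF.inter hU (UF.inter hU hclosed hreg)
    (UF.inter hU hstatU homega))
  obtain ⟨⟨hxclosed, hxreg⟩, hxstat, hxomega⟩ := hx
  set B := x.val with hB
  have hBsub : B ⊆ Set.Iio μ.ord := x.2.1
  -- ω ⊆ B
  have hωB : Set.Iio (Ordinal.omega0) ⊆ B := by
    intro a ha
    obtain ⟨k, rfl⟩ := Ordinal.lt_omega0.1 ha
    exact hxomega ⟨k⟩
  have hωle : (Ordinal.omega0) ≤ otp B := by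
    have := otp_mono hBsub hωB
    rwa [otp_Iio] at this
  -- the regular cardinal
  set o := otp B with ho
  set c := o.cof with hc
  have hco : c.ord = o := hxreg
  have hℵc : ℵ₀ ≤ c := by
    by_contra hlt
    push_neg at hlt
    have h1 : c.ord < (ℵ₀ : Cardinal).ord := Cardinal.ord_lt_ord.2 hlt
    rw [hco, Cardinal.ord_aleph0] at h1
    exact absurd hωle (not_le.2 h1)
  have hcreg : c.IsRegular := by
    refine ⟨hℵc, ?_⟩
    rw [hco]
  have hclam : c < lam := by
    have h1 : Cardinal.lift.{1} o.card = Cardinal.mk B := lift_card_otp hBsub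
    have h2 : Cardinal.lift.{1} o.card < Cardinal.lift.{1} κ := h1 ▸ x.2.2
    have h3 : o.card < κ := Cardinal.lift_lt.1 h2
    exact lt_of_le_of_lt (le_trans (Ordinal.cof_le_card o) h3.le) hκlam
  refine ⟨B, hBsub, hxclosed, ⟨c, hcreg, hclam, ?_⟩, ?_⟩
  · rw [hco, ← lift_otp hBsub]
  · refine isStatIn_mono ?_ hxstat
    exact Set.inter_subset_inter_left B (fun α hα => hα.1)
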